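/- Let y : ℝ → ℝ and t₀ ≠ 0, and set x₀ = −1/t₀, Y = y(x₀). Suppose y has derivative x₀²·Y³ − (2x₀ + 1)·Y² + Y at x₀ — that is, y solves the 1-parameter AIL representative u' = (α + x²)u³ − (2x + 1)u² + u with α = 0. Define u(t) = (y(−1/t) + t)/t². Then u has derivative u(t₀)³ − (t₀ + 1)·u(t₀)²/t₀ at t₀. Hence the Class 4 equation y' = y³ − (x + 1)y²/x, collected among the Abel examples of Kamke's book, is a member of the AIL class. -/

import Mathlib

/-- The Class 4 equation `y' = y³ − (x + 1)y²/x`, collected among the Abel examples of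
Kamke's book, is a member of the AIL class: it is obtained from the 1-parameter AIL
representative `u' = (α + x²)u³ − (2x + 1)u² + u` with `α = 0` by the change of
variables `{x = −1/t, y = t²u − t}`, i.e. `u = (y + t)/t²`. -/
theorem class4_member_of_AIL
    (y : ℝ → ℝ) (t₀ : ℝ) (ht₀ : t₀ ≠ 0)
    (x₀ Y : ℝ) (hx₀ : x₀ = -1 / t₀) (hY : Y = y x₀)
    (hy : HasDerivAt y (x₀ ^ 2 * Y ^ 3 - (2 * x₀ + 1) * Y ^ 2 + Y) x₀)
    (u : ℝ → ℝ) (hu : u = fun t => (y (-1 / t) + t) / t ^ 2) :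
    HasDerivAt u ((u t₀) ^ 3 - (t₀ + 1) * (u t₀) ^ 2 / t₀) t₀ := by
  subst hx₀ hY hu
  have hinner : HasDerivAt (fun t : ℝ => -1 / t) (1 / t₀ ^ 2) t₀ := by
    have h := (hasDerivAt_inv ht₀).neg
    have e1 : (fun t : ℝ => -1 / t) = fun t : ℝ => -t⁻¹ := by
      funext t; rw [neg_div, one_div]
    have e2 : (1 : ℝ) / t₀ ^ 2 = -(-(t₀ ^ 2)⁻¹) := by rw [neg_neg, one_div]
    rw [e1, e2]; exact h
  set Y := y (-1 / t₀) with hY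
  set D : ℝ := (-1 / t₀) ^ 2 * Y ^ 3 - (2 * (-1 / t₀) + 1) * Y ^ 2 + Y with hD
  have hcomp : HasDerivAt (fun t : ℝ => y (-1 / t)) (D * (1 / t₀ ^ 2)) t₀ :=
    hy.comp t₀ hinner
  have hnum : HasDerivAt (fun t : ℝ => y (-1 / t) + t) (D * (1 / t₀ ^ 2) + 1) t₀ :=
    hcomp.add (hasDerivAt_id t₀)
  have hden : HasDerivAt (fun t : ℝ => t ^ 2) (2 * t₀) t₀ := by
    simpa using hasDerivAt_pow 2 t₀
  have hden0 : t₀ ^ 2 ≠ 0 := pow_ne_zero 2 ht₀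
  have hdiv : HasDerivAt (fun t : ℝ => (y (-1 / t) + t) / t ^ 2)
      (((D * (1 / t₀ ^ 2) + 1) * t₀ ^ 2 - (Y + t₀) * (2 * t₀)) / (t₀ ^ 2) ^ 2) t₀ :=
    hnum.div hden hden0
  convert hdiv using 1
  show ((Y + t₀) / t₀ ^ 2) ^ 3 - (t₀ + 1) * ((Y + t₀) / t₀ ^ 2) ^ 2 / t₀ =
    ((D * (1 / t₀ ^ 2) + 1) * t₀ ^ 2 - (Y + t₀) * (2 * t₀)) / (t₀ ^ 2) ^ 2
  rw [hD]
  field_simp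
  ring
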